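/- Let F be a nonarchimedean local field of odd residue characteristic with ring of integers O, uniformizer ϖ, and residue field of cardinality q. Let ψ : F → ℂ^× be a nontrivial additive character and let N be the smallest integer such that ψ is trivial on ϖ^N O. Then for every unit a ∈ O^× and every α ∈ F, ∫_{a + ϖO} ψ(α x²) dx = (dx(O)/q) · ψ(a² α) · 1_{ϖ^{N-1}O}(α), where dx is a Haar measure on F. In particular ∫_{1+ϖO} ψ(αx²) dx = ∫_{-1+ϖO} ψ(αx²) dx for all α ∈ F. -/

import Mathlib

open MeasureTheory

/-- Let `F` be a nonarchimedean local field of odd residue characteristic —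
formalized as a complete, locally compact, nontrivially normed field with ultrametric norm,
ring of integers `O = {‖x‖ ≤ 1}`, uniformizer `ϖ` and residue cardinality `q` (so that
`μ(ϖO) = μ(O)/q`), with `‖2‖ = 1` (odd residue characteristic) — equipped with a Haar
measure `μ`.  Let `ψ : F → ℂˣ` be a nontrivial continuous additive character and `N` the
smallest integer with `ψ` trivial on `ϖ^N O`.  Then for every unit `a` (`‖a‖ = 1`) and every
`α ∈ F`,
`∫_{a+ϖO} ψ(α x²) dμ(x) = (μ(O)/q) · ψ(a²α) · 1_{ϖ^{N-1}O}(α)`;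
in particular `∫_{1+ϖO} ψ(αx²) dμ = ∫_{-1+ϖO} ψ(αx²) dμ` for all `α`. -/
theorem stmt_8 (F : Type*) [NontriviallyNormedField F] [IsUltrametricDist F]
    [CompleteSpace F] [ProperSpace F]
    [MeasurableSpace F] [BorelSpace F]
    (μ : Measure F) [μ.IsAddHaarMeasure]
    (ϖ : F) (hϖ0 : ϖ ≠ 0) (hϖlt : ‖ϖ‖ < 1)
    (hϖmax : ∀ x : F, ‖x‖ < 1 → ‖x‖ ≤ ‖ϖ‖)
    (htwo : ‖(2 : F)‖ = 1)
    (q : ℕ) (hq1 : 1 < q)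
    (hq : μ {x : F | ‖x‖ ≤ ‖ϖ‖} = μ {x : F | ‖x‖ ≤ 1} / q)
    (ψ : F → ℂ) (hψ_cont : Continuous ψ)
    (hψ_add : ∀ x y : F, ψ (x + y) = ψ x * ψ y)
    (hψ_ne : ∃ x : F, ψ x ≠ 1)
    (N : ℤ) (hN_triv : ∀ x : F, ‖x‖ ≤ 1 → ψ (ϖ ^ N * x) = 1)
    (hN_min : ∀ M : ℤ, (∀ x : F, ‖x‖ ≤ 1 → ψ (ϖ ^ M * x) = 1) → N ≤ M) :
    (∀ a : F, ‖a‖ = 1 → ∀ α : F,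
      ∫ x in {x : F | ‖x - a‖ ≤ ‖ϖ‖}, ψ (α * x ^ 2) ∂μ =
        (((μ {x : F | ‖x‖ ≤ 1}).toReal / q : ℝ) : ℂ) * ψ (a ^ 2 * α) *
          Set.indicator {β : F | ‖β‖ ≤ ‖ϖ ^ (N - 1)‖} (fun _ => (1 : ℂ)) α) ∧
      ∀ α : F,
        ∫ x in {x : F | ‖x - 1‖ ≤ ‖ϖ‖}, ψ (α * x ^ 2) ∂μ =
          ∫ x in {x : F | ‖x - (-1)‖ ≤ ‖ϖ‖}, ψ (α * x ^ 2) ∂μ := by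
  classical
  have hum : ∀ x y : F, ‖x + y‖ ≤ max ‖x‖ ‖y‖ := fun x y =>
    IsUltrametricDist.norm_add_le_max x y
  -- ψ 0 = 1
  have hψ0 : ψ 0 = 1 := by simpa using hN_triv 0 (by simp)
  -- ϖ powers nonzero
  have hϖN : ∀ i : ℤ, (ϖ : F) ^ i ≠ 0 := fun i => zpow_ne_zero i hϖ0
  have hϖnormpos : ∀ i : ℤ, (0:ℝ) < ‖ϖ ^ i‖ := fun i => norm_pos_iff.mpr (hϖN i)
  -- triviality below conductor
  have htriv : ∀ z : F, ‖z‖ ≤ ‖ϖ ^ N‖ → ψ z = 1 := by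
    intro z hz
    have hz' : ϖ ^ N * (z / ϖ ^ N) = z := by
      rw [mul_comm, div_mul_cancel₀ _ (hϖN N)]
    have := hN_triv (z / ϖ ^ N) (by
      rw [norm_div, div_le_one (hϖnormpos N)]; exact hz)
    rwa [hz'] at this
  have hpow : ‖ϖ ^ (N - 1)‖ * ‖ϖ‖ = ‖ϖ ^ N‖ := by
    have hNN : N - 1 + 1 = N := by omega
    rw [← norm_mul, ← zpow_add_one₀ hϖ0, hNN]
  -- measurability of the sets
  have hSmeas : ∀ a : F, MeasurableSet {x : F | ‖x - a‖ ≤ ‖ϖ‖} := by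
    intro a
    exact (isClosed_le (by fun_prop) continuous_const).measurableSet
  -- measure of the sets
  have hμS : ∀ a : F, μ {x : F | ‖x - a‖ ≤ ‖ϖ‖} = μ {x : F | ‖x‖ ≤ 1} / q := by
    intro a
    have hset : {x : F | ‖x - a‖ ≤ ‖ϖ‖} = (fun x => -a + x) ⁻¹' {x : F | ‖x‖ ≤ ‖ϖ‖} := by
      ext x; simp [sub_eq_add_neg, add_comm]
    rw [hset, measure_preimage_add, hq]
  have hμO_fin : μ {x : F | ‖x‖ ≤ 1} ≠ ⊤ := by
    have h1 : {x : F | ‖x‖ ≤ 1} = Metric.closedBall (0:F) 1 := by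
      ext x; simp [Metric.mem_closedBall, dist_zero_right]
    rw [h1]
    exact (isCompact_closedBall 0 1).measure_lt_top.ne
  have hμtoReal : ∀ a : F, (μ {x : F | ‖x - a‖ ≤ ‖ϖ‖}).toReal
      = (μ {x : F | ‖x‖ ≤ 1}).toReal / q := by
    intro a
    rw [hμS a, ENNReal.toReal_div]
    simp
  -- the key computation
  have key : ∀ a : F, ‖a‖ = 1 → ∀ α : F,
      ∫ x in {x : F | ‖x - a‖ ≤ ‖ϖ‖}, ψ (α * x ^ 2) ∂μ =
        (((μ {x : F | ‖x‖ ≤ 1}).toReal / q : ℝ) : ℂ) * ψ (a ^ 2 * α) *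
          Set.indicator {β : F | ‖β‖ ≤ ‖ϖ ^ (N - 1)‖} (fun _ => (1 : ℂ)) α := by
    intro a ha α
    by_cases h : ‖α‖ ≤ ‖ϖ ^ (N - 1)‖
    · -- small α : integrand is constant
      have hind : Set.indicator {β : F | ‖β‖ ≤ ‖ϖ ^ (N - 1)‖} (fun _ => (1 : ℂ)) α = 1 :=
        Set.indicator_of_mem (show α ∈ {β : F | ‖β‖ ≤ ‖ϖ ^ (N - 1)‖} from h) _
      have hconst : ∀ x ∈ {x : F | ‖x - a‖ ≤ ‖ϖ‖}, ψ (α * x ^ 2) = ψ (a ^ 2 * α) := by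
        intro x hx
        simp only [Set.mem_setOf_eq] at hx
        have hx1 : ‖x‖ ≤ 1 := by
          have h1 : ‖x - a + a‖ ≤ max ‖x - a‖ ‖a‖ := hum _ _
          have h2 : x - a + a = x := by ring
          rw [h2] at h1
          exact h1.trans (max_le (hx.trans hϖlt.le) ha.le)
        have hxa : ‖x + a‖ ≤ 1 := by
          refine (hum x a).trans (max_le hx1 ha.le)
        have hsplit : α * x ^ 2 = a ^ 2 * α + α * ((x - a) * (x + a)) := by ring
        have hnorm : ‖α * ((x - a) * (x + a))‖ ≤ ‖ϖ ^ N‖ := by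
          rw [norm_mul, norm_mul, ← hpow]
          have h1 : ‖x - a‖ * ‖x + a‖ ≤ ‖ϖ‖ :=
            (mul_le_of_le_one_right (norm_nonneg _) hxa).trans hx
          exact mul_le_mul h h1 (by positivity) (norm_nonneg _)
        rw [hsplit, hψ_add, htriv _ hnorm, mul_one]
      rw [setIntegral_congr_fun (hSmeas a) hconst, setIntegral_const, measureReal_def, hμtoReal a, hind,
        mul_one, Complex.real_smul]
    · -- large α : integral vanishes
      have hind : Set.indicator {β : F | ‖β‖ ≤ ‖ϖ ^ (N - 1)‖} (fun _ => (1 : ℂ)) α = 0 :=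
        Set.indicator_of_notMem (show α ∉ {β : F | ‖β‖ ≤ ‖ϖ ^ (N - 1)‖} from h) _
      rw [hind, mul_zero]
      push_neg at h
      -- find y witnessing nontriviality at level N-1
      obtain ⟨y, hy1, hy2⟩ : ∃ y : F, ‖y‖ ≤ 1 ∧ ψ (ϖ ^ (N - 1) * y) ≠ 1 := by
        by_contra hcon
        push_neg at hcon
        have := hN_min (N - 1) (fun x hx => hcon x hx)
        omega
      have hα0 : α ≠ 0 := by
        intro h0; rw [h0, norm_zero] at h; exact absurd h (not_lt.mpr (hϖnormpos _).le)
      have ha0 : a ≠ 0 := by intro h0; rw [h0, norm_zero] at ha; norm_num at ha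
      have h20 : (2 : F) ≠ 0 := by intro h0; rw [h0, norm_zero] at htwo; norm_num at htwo
      set t : F := ϖ ^ (N - 1) * y / (2 * a * α) with ht_def
      have htval : 2 * a * α * t = ϖ ^ (N - 1) * y := by
        rw [ht_def]; field_simp
      have hαt_eq : α * t = ϖ ^ (N - 1) * y / (2 * a) := by
        rw [ht_def]; field_simp
      have hαt : ‖α * t‖ ≤ ‖ϖ ^ (N - 1)‖ := by
        calc ‖α * t‖ = ‖ϖ ^ (N - 1)‖ * ‖y‖ / (‖(2:F)‖ * ‖a‖) := by
              rw [hαt_eq, norm_div, norm_mul, norm_mul]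
          _ = ‖ϖ ^ (N - 1)‖ * ‖y‖ := by rw [htwo, ha]; norm_num
          _ ≤ ‖ϖ ^ (N - 1)‖ := mul_le_of_le_one_right (norm_nonneg _) hy1
      have ht_lt : ‖t‖ < 1 := by
        have h1 : ‖α‖ * ‖t‖ ≤ ‖ϖ ^ (N - 1)‖ := by rw [← norm_mul]; exact hαt
        nlinarith [norm_nonneg t, hϖnormpos (N - 1)]
      have ht : ‖t‖ ≤ ‖ϖ‖ := hϖmax t ht_lt
      set c : ℂ := ψ (ϖ ^ (N - 1) * y) with hc_def
      set S : Set F := {x : F | ‖x - a‖ ≤ ‖ϖ‖} with hS_def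
      -- S is invariant under translation by t
      have hmem : ∀ x : F, x + t ∈ S ↔ x ∈ S := by
        intro x
        constructor
        · intro hx
          simp only [hS_def, Set.mem_setOf_eq] at hx ⊢
          have : ‖(x + t - a) + (-t)‖ ≤ max ‖x + t - a‖ ‖-t‖ := hum _ _
          rw [norm_neg] at this
          have heq : (x + t - a) + (-t) = x - a := by ring
          rw [heq] at this
          exact this.trans (max_le hx ht)
        · intro hx
          simp only [hS_def, Set.mem_setOf_eq] at hx ⊢
          have : ‖(x - a) + t‖ ≤ max ‖x - a‖ ‖t‖ := hum _ _
          have heq : (x - a) + t = x + t - a := by ring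
          rw [heq] at this
          exact this.trans (max_le hx ht)
      -- pointwise identity on S
      have hpt : ∀ x ∈ S, ψ (α * (x + t) ^ 2) = c * ψ (α * x ^ 2) := by
        intro x hx
        simp only [hS_def, Set.mem_setOf_eq] at hx
        have hsplit : α * (x + t) ^ 2 =
            α * x ^ 2 + 2 * a * α * t + (α * t ^ 2 + 2 * α * t * (x - a)) := by ring
        have hsmall : ‖α * t ^ 2 + 2 * α * t * (x - a)‖ ≤ ‖ϖ ^ N‖ := by
          refine (hum _ _).trans (max_le ?_ ?_)
          · have : α * t ^ 2 = (α * t) * t := by ring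
            rw [this, norm_mul, ← hpow]
            exact mul_le_mul hαt ht (norm_nonneg _) (hϖnormpos _).le
          · have : 2 * α * t * (x - a) = 2 * ((α * t) * (x - a)) := by ring
            rw [this, norm_mul, htwo, one_mul, norm_mul, ← hpow]
            exact mul_le_mul hαt hx (norm_nonneg _) (hϖnormpos _).le
        rw [hsplit, hψ_add, hψ_add, htriv _ hsmall, mul_one, htval, ← hc_def]
        ring
      -- translation invariance kills the integral
      set I : ℂ := ∫ x in S, ψ (α * x ^ 2) ∂μ with hI_def
      have h1 : (∫ x : F, S.indicator (fun x => ψ (α * x ^ 2)) (x + t) ∂μ) = I := by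
        rw [integral_add_right_eq_self (S.indicator (fun x => ψ (α * x ^ 2))) t,
          integral_indicator (hSmeas a)]
      have h2 : ∀ x : F, S.indicator (fun x => ψ (α * x ^ 2)) (x + t)
          = S.indicator (fun x => c * ψ (α * x ^ 2)) x := by
        intro x
        by_cases hx : x ∈ S
        · rw [Set.indicator_of_mem ((hmem x).mpr hx), Set.indicator_of_mem hx]
          exact hpt x hx
        · rw [Set.indicator_of_notMem (fun hmem' => hx ((hmem x).mp hmem')),
            Set.indicator_of_notMem hx]
      have h3 : I = c * I := by
        calc I = ∫ x : F, S.indicator (fun x => ψ (α * x ^ 2)) (x + t) ∂μ := h1.symm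
          _ = ∫ x : F, S.indicator (fun x => c * ψ (α * x ^ 2)) x ∂μ := by
              exact congrArg (fun g => ∫ x : F, g x ∂μ) (funext h2)
          _ = ∫ x in S, c * ψ (α * x ^ 2) ∂μ := integral_indicator (hSmeas a)
          _ = c * I := by rw [hI_def, ← integral_const_mul]
      have h4 : (c - 1) * I = 0 := by rw [sub_mul, one_mul, ← h3, sub_self]
      have h5 : I = 0 := by
        rcases mul_eq_zero.mp h4 with h | h
        · exact absurd (by linear_combination h : c = 1) hy2
        · exact h
      exact h5
  refine ⟨key, fun α => ?_⟩
  rw [key 1 (by simp) α, key (-1) (by simp) α]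
  norm_num
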